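/- Let G_{2,n} = P_2 □ P_n be the grid graph with n ≥ 3. Then the Steiner 3-hyper-Wiener index of G_{2,n} equals SWW_3(G_{2,n}) = (1/15)(3n⁵ + 10n⁴ − 25n² + 12n). -/

import Mathlib

open Finset SimpleGraph Polynomial

/-- The Steiner distance of a vertex set `S`: the minimum number of edges of a
connected subgraph of `G` whose vertex set contains `S`. -/
noncomputable def steinerDist {V : Type*} (G : SimpleGraph V) (S : Set V) : ℕ :=
  sInf {n | ∃ H : G.Subgraph, H.Connected ∧ S ⊆ H.verts ∧ H.edgeSet.ncard = n}

/-- The Steiner `k`-Wiener index. -/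
noncomputable def SW {V : Type*} [Fintype V] [DecidableEq V] (k : ℕ) (G : SimpleGraph V) : ℕ :=
  ∑ S ∈ Finset.powersetCard k (Finset.univ : Finset V), steinerDist G (S : Set V)

/-- The Steiner `k`-hyper-Wiener index. -/
noncomputable def SWW {V : Type*} [Fintype V] [DecidableEq V] (k : ℕ) (G : SimpleGraph V) : ℝ :=
  (1/2) * ∑ S ∈ Finset.powersetCard k (Finset.univ : Finset V), (steinerDist G (S : Set V) : ℝ)
    + (1/2) * ∑ S ∈ Finset.powersetCard k (Finset.univ : Finset V), (steinerDist G (S : Set V) : ℝ) ^ 2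

/-- The Steiner `k`-Hosoya polynomial `∑_{m ≥ 0} d_k(G,m) x^m`, written as
`∑_{S ⊆ V(G), |S| = k} x^{d(S)}`. -/
noncomputable def SH {V : Type*} [Fintype V] [DecidableEq V] (k : ℕ) (G : SimpleGraph V) :
    Polynomial ℝ :=
  ∑ S ∈ Finset.powersetCard k (Finset.univ : Finset V), Polynomial.X ^ (steinerDist G (S : Set V))

/-- The Wiener index `W(G) = ∑_{{u,v} ⊆ V(G)} d(u,v)` (each unordered pair counted once). -/
noncomputable def wiener {V : Type*} [Fintype V] [DecidableEq V] (G : SimpleGraph V) : ℝ :=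
  (∑ p ∈ Finset.univ.offDiag, (G.dist p.1 p.2 : ℝ)) / 2

/-- `\overline{WW}(G) = ∑_{{u,v} ⊆ V(G)} d(u,v)²`. -/
noncomputable def WWbar {V : Type*} [Fintype V] [DecidableEq V] (G : SimpleGraph V) : ℝ :=
  (∑ p ∈ Finset.univ.offDiag, (G.dist p.1 p.2 : ℝ) ^ 2) / 2

/-- The set of ordered triples of pairwise distinct vertices. -/
def O3 (V : Type*) [Fintype V] [DecidableEq V] : Finset (V × V × V) :=
  Finset.univ.filter fun t => t.1 ≠ t.2.1 ∧ t.1 ≠ t.2.2 ∧ t.2.1 ≠ t.2.2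

/-- `\widehat{WW}(G) = ∑_{(u,v,w) ∈ O₃(G)} d(u,v)·d(u,w)`. -/
noncomputable def WWhat {V : Type*} [Fintype V] [DecidableEq V] (G : SimpleGraph V) : ℝ :=
  ∑ t ∈ O3 V, (G.dist t.1 t.2.1 : ℝ) * (G.dist t.1 t.2.2 : ℝ)

/-- `z` is a median of the triple `u, v, w`: it lies on a shortest `u,v`-path, a shortest
`u,w`-path and a shortest `v,w`-path. -/
def IsMedian {V : Type*} (G : SimpleGraph V) (u v w z : V) : Prop :=
  G.dist u z + G.dist z v = G.dist u v ∧
  G.dist u z + G.dist z w = G.dist u w ∧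
  G.dist v z + G.dist z w = G.dist v w

/-- A modular graph: a connected graph in which every triple of vertices has a median. -/
def IsModular {V : Type*} (G : SimpleGraph V) : Prop :=
  G.Connected ∧ ∀ u v w : V, ∃ z : V, IsMedian G u v w z

/-- The hypercube graph `Q_n` on `Fin n → Bool`: two vertices are adjacent iff they differ
in exactly one coordinate. -/
def hypercubeGraph (n : ℕ) : SimpleGraph (Fin n → Bool) :=
  SimpleGraph.fromRel fun x y => ∃! i, x i ≠ y i

/-- A partial cube: a connected graph isometrically embeddable into a hypercube. -/
def IsPartialCube {V : Type*} (G : SimpleGraph V) : Prop :=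
  G.Connected ∧ ∃ (n : ℕ) (f : V → (Fin n → Bool)),
    ∀ u v : V, (hypercubeGraph n).dist (f u) (f v) = G.dist u v

/-- The Djoković–Winkler relation Θ on (edges viewed as) unordered pairs:
`s(u₁,v₁) Θ s(u₂,v₂)` iff `d(u₁,u₂) + d(v₁,v₂) ≠ d(u₁,v₂) + d(v₁,u₂)`. -/
def theta {V : Type*} (G : SimpleGraph V) (e f : Sym2 V) : Prop :=
  ∃ u₁ v₁ u₂ v₂ : V, e = s(u₁, v₁) ∧ f = s(u₂, v₂) ∧
    G.dist u₁ u₂ + G.dist v₁ v₂ ≠ G.dist u₁ v₂ + G.dist v₁ u₂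

/-- `E` together with the component data `U`, `U'` is the family of Θ-classes of the
partial cube `G`: each `E i` is a Θ-class of edges, the classes are pairwise distinct and
cover the edge set, and `U i`, `U' i` are (the vertex sets of) the two connected components
of `G - E i`. -/
def IsThetaClassSetup {V : Type*} (G : SimpleGraph V) (d : ℕ)
    (E : Fin d → Set (Sym2 V)) (U U' : Fin d → Set V) : Prop :=
  (∀ i, ∃ e ∈ G.edgeSet, E i = {f | f ∈ G.edgeSet ∧ theta G f e}) ∧
  Function.Injective E ∧
  G.edgeSet = ⋃ i, E i ∧
  ∀ i, ∃ c c' : (G.deleteEdges (E i)).ConnectedComponent, c ≠ c' ∧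
    U i = c.supp ∧ U' i = c'.supp ∧
    ∀ b : (G.deleteEdges (E i)).ConnectedComponent, b = c ∨ b = c'

theorem SimpleGraph.Subgraph.Connected.sup {V : Type*} {G : SimpleGraph V} {H K : G.Subgraph}
    (hH : H.Connected) (hK : K.Connected) (hn : (H ⊓ K).verts.Nonempty) : (H ⊔ K).Connected :=
  SimpleGraph.Subgraph.connected_sup hH.preconnected hK.preconnected hn

namespace SteinerLadder

abbrev Lad (n : ℕ) : SimpleGraph (Fin 2 × Fin n) := SimpleGraph.pathGraph 2 □ SimpleGraph.pathGraph n

variable {n : ℕ}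

lemma lad_adj {p q : Fin 2 × Fin n} : (Lad n).Adj p q ↔
    (p.1 = q.1 ∧ (p.2.val + 1 = q.2.val ∨ q.2.val + 1 = p.2.val)) ∨
    (p.2 = q.2 ∧ p.1 ≠ q.1) := by
  rw [boxProd_adj]
  constructor
  · rintro (⟨h, h2⟩ | ⟨h, h2⟩)
    · rw [pathGraph_adj] at h
      refine Or.inr ⟨h2, ?_⟩
      intro hc; rw [hc] at h; omega
    · exact Or.inl ⟨h2, (pathGraph_adj.mp h)⟩
  · rintro (⟨h, h2⟩ | ⟨h, h2⟩)
    · exact Or.inr ⟨pathGraph_adj.mpr h2, h⟩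
    · refine Or.inl ⟨pathGraph_adj.mpr ?_, h⟩
      have := p.1.isLt; have := q.1.isLt
      rcases Fin.val_eq_val p.1 q.1 with _
      omega

lemma hwalk_aux (a : Fin 2) : ∀ (d : ℕ) (i j : Fin n), i.val + d = j.val →
    ∃ w : (Lad n).Walk (a, i) (a, j), w.length = d := by
  intro d
  induction d with
  | zero => intro i j hij
            have : i = j := Fin.ext (by omega)
            subst this
            exact ⟨SimpleGraph.Walk.nil, rfl⟩
  | succ d ih =>
      intro i j hij
      have hlt : i.val + 1 < n := by have := j.isLt; omega
      set i' : Fin n := ⟨i.val + 1, by omega⟩ with hi'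
      have hadj : (Lad n).Adj (a, i) (a, i') := by
        rw [lad_adj]; exact Or.inl ⟨rfl, Or.inl rfl⟩
      obtain ⟨w, hw⟩ := ih i' j (by simp [hi']; omega)
      exact ⟨SimpleGraph.Walk.cons hadj w, by simp [hw]⟩

lemma hwalk (a : Fin 2) (i j : Fin n) :
    ∃ w : (Lad n).Walk (a, i) (a, j), w.length = max i.val j.val - min i.val j.val := by
  rcases le_total i.val j.val with h | h
  · obtain ⟨w, hw⟩ := hwalk_aux a (j.val - i.val) i j (by omega)
    exact ⟨w, by omega⟩
  · obtain ⟨w, hw⟩ := hwalk_aux a (i.val - j.val) j i (by omega)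
    exact ⟨w.reverse, by simp [hw]; omega⟩

lemma walk_between (p q : Fin 2 × Fin n) :
    ∃ w : (Lad n).Walk p q,
      w.length = (max p.2.val q.2.val - min p.2.val q.2.val) + (if p.1 = q.1 then 0 else 1) := by
  obtain ⟨a, i⟩ := p; obtain ⟨b, j⟩ := q
  by_cases hab : a = b
  · subst hab
    obtain ⟨w, hw⟩ := hwalk a i j
    exact ⟨w, by simp [hw]⟩
  · obtain ⟨w, hw⟩ := hwalk a i j
    have hadj : (Lad n).Adj (a, j) (b, j) := by rw [lad_adj]; exact Or.inr ⟨rfl, hab⟩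
    refine ⟨w.append (SimpleGraph.Walk.cons hadj SimpleGraph.Walk.nil), ?_⟩
    simp [hw, hab]


def spN (x y z : ℕ) : ℕ := max x (max y z) - min x (min y z)
def medN (x y z : ℕ) : ℕ := max (min x y) (max (min y z) (min x z))

def DT (u v w : Fin 2 × Fin n) : ℕ :=
  spN u.2.val v.2.val w.2.val + (if u.1 = v.1 ∧ v.1 = w.1 then 0 else 1)


lemma med_dists (x y z : ℕ) :
    (max (medN x y z) x - min (medN x y z) x) + (max (medN x y z) y - min (medN x y z) y)
      + (max (medN x y z) z - min (medN x y z) z) = spN x y z := by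
  unfold medN spN; omega

lemma row_bits (a b c : Fin 2) :
    ((if (if b = c then b else a) = a then 0 else 1)
      + (if (if b = c then b else a) = b then 0 else 1)
      + (if (if b = c then b else a) = c then 0 else 1) : ℕ)
      = (if a = b ∧ b = c then 0 else 1 : ℕ) := by revert a b c; decide

lemma walk_edge_ncard_le {u v : Fin 2 × Fin n} (w : (Lad n).Walk u v) :
    w.toSubgraph.edgeSet.ncard ≤ w.length := by
  have h1 : w.toSubgraph.edgeSet = ↑(w.edges.toFinset) := by
    ext e; simp [SimpleGraph.Walk.mem_edges_toSubgraph]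
  rw [h1, Set.ncard_coe_finset]
  calc w.edges.toFinset.card ≤ w.edges.length := w.edges.toFinset_card_le
    _ = w.length := w.length_edges


lemma exists_good_subgraph (u v w : Fin 2 × Fin n) :
    ∃ H : (Lad n).Subgraph, H.Connected ∧ ({u, v, w} : Set (Fin 2 × Fin n)) ⊆ H.verts ∧
      H.edgeSet.ncard ≤ DT u v w := by
  classical
  set b0 : Fin 2 := if v.1 = w.1 then v.1 else u.1 with hb0
  have hmlt : medN u.2.val v.2.val w.2.val < n := by
    have h1 := u.2.isLt; have h2 := v.2.isLt; have h3 := w.2.isLt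
    unfold medN; omega
  set m : Fin n := ⟨medN u.2.val v.2.val w.2.val, hmlt⟩ with hm
  obtain ⟨wu, hwu⟩ := walk_between (b0, m) u
  obtain ⟨wv, hwv⟩ := walk_between (b0, m) v
  obtain ⟨ww, hww⟩ := walk_between (b0, m) w
  set H : (Lad n).Subgraph := wu.toSubgraph ⊔ wv.toSubgraph ⊔ ww.toSubgraph with hH
  have hconn : H.Connected := by
    apply SimpleGraph.Subgraph.Connected.sup
    · apply SimpleGraph.Subgraph.Connected.sup
        wu.toSubgraph_connected wv.toSubgraph_connected
      refine ⟨(b0, m), ?_⟩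
      simp only [SimpleGraph.Subgraph.verts_inf, Set.mem_inter_iff]
      exact ⟨wu.start_mem_verts_toSubgraph, wv.start_mem_verts_toSubgraph⟩
    · exact ww.toSubgraph_connected
    · refine ⟨(b0, m), ?_⟩
      simp only [SimpleGraph.Subgraph.verts_inf, SimpleGraph.Subgraph.verts_sup,
        Set.mem_inter_iff, Set.mem_union]
      exact ⟨Or.inl wu.start_mem_verts_toSubgraph, ww.start_mem_verts_toSubgraph⟩
  have hsub : ({u, v, w} : Set (Fin 2 × Fin n)) ⊆ H.verts := by
    intro x hx
    simp only [hH, SimpleGraph.Subgraph.verts_sup, Set.mem_union]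
    rcases hx with rfl | rfl | rfl
    · exact Or.inl (Or.inl wu.end_mem_verts_toSubgraph)
    · exact Or.inl (Or.inr wv.end_mem_verts_toSubgraph)
    · exact Or.inr ww.end_mem_verts_toSubgraph
  have hcard : H.edgeSet.ncard ≤ wu.length + wv.length + ww.length := by
    have : H.edgeSet = wu.toSubgraph.edgeSet ∪ wv.toSubgraph.edgeSet ∪ ww.toSubgraph.edgeSet := by
      simp [hH, SimpleGraph.Subgraph.edgeSet_sup]
    rw [this]
    calc (wu.toSubgraph.edgeSet ∪ wv.toSubgraph.edgeSet ∪ ww.toSubgraph.edgeSet).ncard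
        ≤ (wu.toSubgraph.edgeSet ∪ wv.toSubgraph.edgeSet).ncard + ww.toSubgraph.edgeSet.ncard :=
          Set.ncard_union_le _ _
      _ ≤ wu.toSubgraph.edgeSet.ncard + wv.toSubgraph.edgeSet.ncard + ww.toSubgraph.edgeSet.ncard := by
          have := Set.ncard_union_le wu.toSubgraph.edgeSet wv.toSubgraph.edgeSet
          omega
      _ ≤ wu.length + wv.length + ww.length := by
          have h1 := walk_edge_ncard_le wu
          have h2 := walk_edge_ncard_le wv
          have h3 := walk_edge_ncard_le ww
          omega
  have hlen : wu.length + wv.length + ww.length = DT u v w := by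
    rw [hwu, hwv, hww]
    unfold DT
    have hmval : (m : ℕ) = medN u.2.val v.2.val w.2.val := rfl
    have hrow : ((if b0 = u.1 then 0 else 1)
      + (if b0 = v.1 then 0 else 1)
      + (if b0 = w.1 then 0 else 1) : ℕ)
      = (if u.1 = v.1 ∧ v.1 = w.1 then 0 else 1 : ℕ) := by
      rw [hb0]; exact row_bits u.1 v.1 w.1
    have hd := med_dists u.2.val v.2.val w.2.val
    simp only [hmval]
    omega
  exact ⟨H, hconn, hsub, by omega⟩


lemma crossing_h_walk (H : (Lad n).Subgraph) {a b : H.verts} (w : H.coe.Walk a b) (k : ℕ)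
    (h1 : (a : Fin 2 × Fin n).2.val ≤ k) (h2 : k < (b : Fin 2 × Fin n).2.val) :
    ∃ x y : Fin 2 × Fin n, s(x, y) ∈ H.edgeSet ∧ x.2.val = k ∧ y.2.val = k + 1 := by
  induction w with
  | nil => omega
  | @cons p c q hadj w ih =>
      by_cases hc : (c : Fin 2 × Fin n).2.val ≤ k
      · exact ih hc h2
      · have hHadj : H.Adj p.val c.val := hadj
        have hladj : (Lad n).Adj p.val c.val := H.adj_sub hHadj
        rcases lad_adj.mp hladj with ⟨_, hcol⟩ | ⟨hcol, _⟩
        · refine ⟨p.val, c.val, SimpleGraph.Subgraph.mem_edgeSet.mpr hHadj, ?_, ?_⟩ <;> omega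
        · rw [hcol] at h1; omega

lemma crossing_h (H : (Lad n).Subgraph) (hc : H.Connected) {p q : Fin 2 × Fin n}
    (hp : p ∈ H.verts) (hq : q ∈ H.verts) (k : ℕ) (h1 : p.2.val ≤ k) (h2 : k < q.2.val) :
    ∃ x y : Fin 2 × Fin n, s(x, y) ∈ H.edgeSet ∧ x.2.val = k ∧ y.2.val = k + 1 := by
  obtain ⟨w⟩ := hc ⟨p, hp⟩ ⟨q, hq⟩
  exact crossing_h_walk H w k h1 h2

lemma crossing_v_walk (H : (Lad n).Subgraph) {a b : H.verts} (w : H.coe.Walk a b)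
    (hne : (a : Fin 2 × Fin n).1 ≠ (b : Fin 2 × Fin n).1) :
    ∃ x y : Fin 2 × Fin n, s(x, y) ∈ H.edgeSet ∧ x.1 ≠ y.1 ∧ x.2 = y.2 := by
  induction w with
  | nil => exact absurd rfl hne
  | @cons p c q hadj w ih =>
      by_cases hcc : (c : Fin 2 × Fin n).1 = (q : Fin 2 × Fin n).1
      · have hHadj : H.Adj p.val c.val := hadj
        have hladj : (Lad n).Adj p.val c.val := H.adj_sub hHadj
        rcases lad_adj.mp hladj with ⟨hrow, _⟩ | ⟨hcol, hrow⟩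
        · exact absurd (hrow.trans hcc) hne
        · exact ⟨p.val, c.val, SimpleGraph.Subgraph.mem_edgeSet.mpr hHadj, hrow, hcol⟩
      · exact ih hcc


lemma DT_le_ncard (H : (Lad n).Subgraph) (hc : H.Connected) (u v w : Fin 2 × Fin n)
    (hs : ({u, v, w} : Set (Fin 2 × Fin n)) ⊆ H.verts) :
    DT u v w ≤ H.edgeSet.ncard := by
  classical
  set cmin := min u.2.val (min v.2.val w.2.val) with hcmin
  set cmax := max u.2.val (max v.2.val w.2.val) with hcmax
  have hu : u ∈ H.verts := hs (by simp)
  have hv : v ∈ H.verts := hs (by simp)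
  have hw : w ∈ H.verts := hs (by simp)
  -- vertices attaining min and max columns
  have hpmin : ∃ p ∈ H.verts, p.2.val = cmin := by
    have : cmin = u.2.val ∨ cmin = v.2.val ∨ cmin = w.2.val := by omega
    rcases this with h | h | h
    exacts [⟨u, hu, h.symm⟩, ⟨v, hv, h.symm⟩, ⟨w, hw, h.symm⟩]
  have hpmax : ∃ p ∈ H.verts, p.2.val = cmax := by
    have : cmax = u.2.val ∨ cmax = v.2.val ∨ cmax = w.2.val := by omega
    rcases this with h | h | h
    exacts [⟨u, hu, h.symm⟩, ⟨v, hv, h.symm⟩, ⟨w, hw, h.symm⟩]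
  obtain ⟨pmin, hpmin1, hpmin2⟩ := hpmin
  obtain ⟨pmax, hpmax1, hpmax2⟩ := hpmax
  have hcross : ∀ k, cmin ≤ k → k < cmax →
      ∃ e, e ∈ H.edgeSet ∧ ∃ x y : Fin 2 × Fin n, e = s(x, y) ∧ x.2.val = k ∧ y.2.val = k + 1 := by
    intro k hk1 hk2
    obtain ⟨x, y, he, hx, hy⟩ := crossing_h H hc hpmin1 hpmax1 k (by omega) (by omega)
    exact ⟨s(x, y), he, x, y, rfl, hx, hy⟩
  set f : ℕ → Sym2 (Fin 2 × Fin n) := fun k =>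
    if h : ∃ e, e ∈ H.edgeSet ∧ ∃ x y : Fin 2 × Fin n, e = s(x, y) ∧ x.2.val = k ∧ y.2.val = k + 1
    then h.choose else s(u, u) with hf
  have hfspec : ∀ k ∈ Finset.Ico cmin cmax, (f k) ∈ H.edgeSet ∧
      ∃ x y : Fin 2 × Fin n, f k = s(x, y) ∧ x.2.val = k ∧ y.2.val = k + 1 := by
    intro k hk
    rw [Finset.mem_Ico] at hk
    have h := hcross k hk.1 hk.2
    rw [hf]
    simp only [dif_pos h]
    exact h.choose_spec
  set F : Finset (Sym2 (Fin 2 × Fin n)) := (Finset.Ico cmin cmax).image f with hF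
  have hFsub : ↑F ⊆ H.edgeSet := by
    intro e he
    rw [hF] at he
    simp only [Finset.coe_image, Set.mem_image, Finset.mem_coe] at he
    obtain ⟨k, hk, rfl⟩ := he
    exact (hfspec k hk).1
  have hinj : Set.InjOn f ↑(Finset.Ico cmin cmax) := by
    intro k hk k' hk' heq
    obtain ⟨x, y, hxy, hx, hy⟩ := (hfspec k (by simpa using hk)).2
    obtain ⟨x', y', hxy', hx', hy'⟩ := (hfspec k' (by simpa using hk')).2
    rw [hxy, hxy'] at heq
    rw [Sym2.eq_iff] at heq
    rcases heq with ⟨h1, h2⟩ | ⟨h1, h2⟩ <;>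
      · have e1 := congrArg (fun p => (Prod.snd p).val) h1
        have e2 := congrArg (fun p => (Prod.snd p).val) h2
        omega
  have hFcard : F.card = cmax - cmin := by
    rw [hF, Finset.card_image_of_injOn hinj, Nat.card_Ico]
  by_cases hrow : u.1 = v.1 ∧ v.1 = w.1
  · have : DT u v w = cmax - cmin := by unfold DT spN; rw [if_pos hrow]; omega
    rw [this, ← hFcard, ← Set.ncard_coe_finset F]
    exact Set.ncard_le_ncard hFsub (Set.toFinite _)
  · -- get a vertical edge
    have hpair : ∃ p q : Fin 2 × Fin n, p ∈ H.verts ∧ q ∈ H.verts ∧ p.1 ≠ q.1 := by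
      by_cases h1 : u.1 = v.1
      · exact ⟨v, w, hv, hw, fun hc' => hrow ⟨h1, hc'⟩⟩
      · exact ⟨u, v, hu, hv, h1⟩
    obtain ⟨p, q, hp, hq, hpq⟩ := hpair
    obtain ⟨wk⟩ := hc ⟨p, hp⟩ ⟨q, hq⟩
    obtain ⟨x, y, hev, hxy1, hxy2⟩ := crossing_v_walk H wk hpq
    have hnotmem : s(x, y) ∉ F := by
      intro hmem
      rw [hF, Finset.mem_image] at hmem
      obtain ⟨k, hk, hfk⟩ := hmem
      obtain ⟨x', y', hxy', hx', hy'⟩ := (hfspec k hk).2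
      rw [hfk] at hxy'
      rw [Sym2.eq_iff] at hxy'
      have e0 := congrArg (fun i : Fin n => i.val) hxy2
      rcases hxy' with ⟨h1, h2⟩ | ⟨h1, h2⟩ <;>
        · have e1 := congrArg (fun p => (Prod.snd p).val) h1
          have e2 := congrArg (fun p => (Prod.snd p).val) h2
          omega
    have hcard' : (insert s(x, y) F).card = cmax - cmin + 1 := by
      rw [Finset.card_insert_of_notMem hnotmem, hFcard]
    have hsub' : ↑(insert s(x, y) F) ⊆ H.edgeSet := by
      rw [Finset.coe_insert]
      exact Set.insert_subset hev hFsub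
    have : DT u v w = cmax - cmin + 1 := by unfold DT spN; rw [if_neg hrow]
    rw [this, ← hcard', ← Set.ncard_coe_finset]
    exact Set.ncard_le_ncard hsub' (Set.toFinite _)



lemma steiner_eq_DT (u v w : Fin 2 × Fin n) :
    steinerDist (Lad n) ({u, v, w} : Set (Fin 2 × Fin n)) = DT u v w := by
  obtain ⟨H0, hc0, hs0, hcard0⟩ := exists_good_subgraph u v w
  have hne : {m | ∃ H : (Lad n).Subgraph, H.Connected ∧
      ({u, v, w} : Set (Fin 2 × Fin n)) ⊆ H.verts ∧ H.edgeSet.ncard = m}.Nonempty :=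
    ⟨H0.edgeSet.ncard, H0, hc0, hs0, rfl⟩
  apply le_antisymm
  · exact le_trans (Nat.sInf_le ⟨H0, hc0, hs0, rfl⟩) hcard0
  · obtain ⟨H1, hc1, hs1, hcard1⟩ := Nat.sInf_mem hne
    rw [steinerDist, ← hcard1]
    exact DT_le_ncard H1 hc1 u v w hs1



-- reflection helper
lemma sum_reflect (f : ℕ → ℝ) (N : ℕ) :
    ∑ x ∈ range N, f (N - x) = ∑ x ∈ range N, f (x + 1) := by
  rw [← Finset.sum_range_reflect (fun x => f (x + 1)) N]
  apply Finset.sum_congr rfl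
  intro x hx
  rw [Finset.mem_range] at hx
  congr 1
  omega

lemma sum_E1 (N : ℕ) : ∑ x ∈ range N, ((x + 1 : ℕ) : ℝ) = ((N : ℝ) ^ 2 + N) / 2 := by
  induction N with
  | zero => simp
  | succ N ih => rw [Finset.sum_range_succ, ih]; push_cast; ring

lemma sum_E2 (N : ℕ) : ∑ x ∈ range N, ((x + 1 : ℕ) : ℝ) ^ 2
    = (2 * (N : ℝ) ^ 3 + 3 * (N : ℝ) ^ 2 + N) / 6 := by
  induction N with
  | zero => simp
  | succ N ih => rw [Finset.sum_range_succ, ih]; push_cast; ring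

lemma sum_M1 (N : ℕ) : ∑ x ∈ range N, ∑ y ∈ range N, ((max x y + 1 : ℕ) : ℝ)
    = (4 * (N : ℝ) ^ 3 + 3 * (N : ℝ) ^ 2 - N) / 6 := by
  induction N with
  | zero => simp
  | succ N ih =>
      rw [Finset.sum_range_succ]
      have h1 : ∀ x ∈ range N, ∑ y ∈ range (N + 1), ((max x y + 1 : ℕ) : ℝ)
          = (∑ y ∈ range N, ((max x y + 1 : ℕ) : ℝ)) + ((N + 1 : ℕ) : ℝ) := by
        intro x hx
        rw [Finset.mem_range] at hx
        rw [Finset.sum_range_succ]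
        congr 2
        omega
      rw [Finset.sum_congr rfl h1, Finset.sum_add_distrib, ih]
      have h2 : ∀ y ∈ range (N + 1), ((max N y + 1 : ℕ) : ℝ) = ((N + 1 : ℕ) : ℝ) := by
        intro y hy
        rw [Finset.mem_range] at hy
        congr 2
        omega
      rw [Finset.sum_congr rfl h2]
      simp only [Finset.sum_const, Finset.card_range, nsmul_eq_mul]
      push_cast
      ring

lemma sum_M2 (N : ℕ) : ∑ x ∈ range N, ∑ y ∈ range N, ((max x y + 1 : ℕ) : ℝ) ^ 2
    = (3 * (N : ℝ) ^ 4 + 4 * (N : ℝ) ^ 3 - N) / 6 := by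
  induction N with
  | zero => simp
  | succ N ih =>
      rw [Finset.sum_range_succ]
      have h1 : ∀ x ∈ range N, ∑ y ∈ range (N + 1), ((max x y + 1 : ℕ) : ℝ) ^ 2
          = (∑ y ∈ range N, ((max x y + 1 : ℕ) : ℝ) ^ 2) + ((N + 1 : ℕ) : ℝ) ^ 2 := by
        intro x hx
        rw [Finset.mem_range] at hx
        rw [Finset.sum_range_succ]
        congr 3
        omega
      rw [Finset.sum_congr rfl h1, Finset.sum_add_distrib, ih]
      have h2 : ∀ y ∈ range (N + 1), ((max N y + 1 : ℕ) : ℝ) ^ 2 = ((N + 1 : ℕ) : ℝ) ^ 2 := by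
        intro y hy
        rw [Finset.mem_range] at hy
        congr 3
        omega
      rw [Finset.sum_congr rfl h2]
      simp only [Finset.sum_const, Finset.card_range, nsmul_eq_mul]
      push_cast
      ring


lemma sum_Mmin (f : ℕ → ℝ) (N : ℕ) :
    ∑ x ∈ range N, ∑ y ∈ range N, f (N - min x y)
      = ∑ x ∈ range N, ∑ y ∈ range N, f (max x y + 1) := by
  rw [← Finset.sum_range_reflect (fun x => ∑ y ∈ range N, f (max x y + 1)) N]
  apply Finset.sum_congr rfl
  intro x hx
  rw [← Finset.sum_range_reflect (fun y => f (max (N - 1 - x) y + 1)) N]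
  apply Finset.sum_congr rfl
  intro y hy
  rw [Finset.mem_range] at hx hy
  congr 1
  omega

lemma sum_spN_cube (g : ℕ → ℝ) (hg0 : g 0 = 0) (N : ℕ) :
    ∑ x ∈ range (N + 1), ∑ y ∈ range (N + 1), ∑ z ∈ range (N + 1), g (spN x y z)
      = (∑ x ∈ range N, ∑ y ∈ range N, ∑ z ∈ range N, g (spN x y z))
        + 3 * (∑ x ∈ range N, ∑ y ∈ range N, g (max x y + 1))
        + 3 * (∑ x ∈ range N, g (x + 1)) := by
  have key : ∀ x, (∑ y ∈ range (N + 1), ∑ z ∈ range (N + 1), g (spN x y z))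
      = (∑ y ∈ range N, ∑ z ∈ range N, g (spN x y z))
        + (∑ y ∈ range N, g (spN x y N)) + (∑ z ∈ range N, g (spN x N z))
        + g (spN x N N) := by
    intro x
    rw [Finset.sum_range_succ]
    have h1 : ∀ y ∈ range N, ∑ z ∈ range (N + 1), g (spN x y z)
        = (∑ z ∈ range N, g (spN x y z)) + g (spN x y N) :=
      fun y _ => Finset.sum_range_succ _ _
    rw [Finset.sum_congr rfl h1, Finset.sum_add_distrib, Finset.sum_range_succ]
    ring
  rw [Finset.sum_range_succ, Finset.sum_congr rfl (fun x _ => key x), key N]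
  simp only [Finset.sum_add_distrib]
  -- canonicalize all the face/edge sums
  have hface1 : ∀ x ∈ range N, ∀ y ∈ range N, g (spN x y N) = g (N - min x y) := by
    intro x hx y hy; rw [Finset.mem_range] at hx hy; congr 1; unfold spN; omega
  have hface2 : ∀ x ∈ range N, ∀ z ∈ range N, g (spN x N z) = g (N - min x z) := by
    intro x hx z hz; rw [Finset.mem_range] at hx hz; congr 1; unfold spN; omega
  have hface3 : ∀ y ∈ range N, ∀ z ∈ range N, g (spN N y z) = g (N - min y z) := by
    intro y hy z hz; rw [Finset.mem_range] at hy hz; congr 1; unfold spN; omega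
  have hedge : ∀ x ∈ range N, g (spN x N N) = g (N - x) := by
    intro x hx; rw [Finset.mem_range] at hx; congr 1; unfold spN; omega
  have hedge2 : ∀ y ∈ range N, g (spN N y N) = g (N - y) := by
    intro y hy; rw [Finset.mem_range] at hy; congr 1; unfold spN; omega
  have hedge3 : ∀ z ∈ range N, g (spN N N z) = g (N - z) := by
    intro z hz; rw [Finset.mem_range] at hz; congr 1; unfold spN; omega
  have hcorner : g (spN N N N) = 0 := by
    have : spN N N N = 0 := by unfold spN; omega
    rw [this, hg0]
  rw [Finset.sum_congr rfl (fun x hx => Finset.sum_congr rfl (hface1 x hx)),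
      Finset.sum_congr rfl (fun x hx => Finset.sum_congr rfl (hface2 x hx)),
      Finset.sum_congr rfl (fun y hy => Finset.sum_congr rfl (hface3 y hy)),
      Finset.sum_congr rfl hedge, Finset.sum_congr rfl hedge2, Finset.sum_congr rfl hedge3,
      hcorner, sum_Mmin g N, sum_reflect g N]
  ring


lemma sum_P1 (N : ℕ) :
    ∑ x ∈ range N, ∑ y ∈ range N, ∑ z ∈ range N, ((spN x y z : ℕ) : ℝ)
      = ((N : ℝ) ^ 4 - (N : ℝ) ^ 2) / 2 := by
  induction N with
  | zero => simp
  | succ N ih =>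
      rw [sum_spN_cube (fun t => ((t : ℕ) : ℝ)) (by simp) N, ih, sum_M1, sum_E1]
      push_cast
      ring

lemma sum_P2 (N : ℕ) :
    ∑ x ∈ range N, ∑ y ∈ range N, ∑ z ∈ range N, ((spN x y z : ℕ) : ℝ) ^ 2
      = (3 * (N : ℝ) ^ 5 - 5 * (N : ℝ) ^ 3 + 2 * N) / 10 := by
  induction N with
  | zero => simp
  | succ N ih =>
      rw [sum_spN_cube (fun t => ((t : ℕ) : ℝ) ^ 2) (by simp) N, ih, sum_M2, sum_E2]
      push_cast
      ring

-- pair sums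
lemma sum_pair_succ (g : ℕ → ℝ) (hg0 : g 0 = 0) (N : ℕ) :
    ∑ x ∈ range (N + 1), ∑ y ∈ range (N + 1), g (max x y - min x y)
      = (∑ x ∈ range N, ∑ y ∈ range N, g (max x y - min x y))
        + 2 * (∑ x ∈ range N, g (x + 1)) := by
  have key : ∀ x ∈ range N, ∑ y ∈ range (N + 1), g (max x y - min x y)
      = (∑ y ∈ range N, g (max x y - min x y)) + g (N - x) := by
    intro x hx
    rw [Finset.mem_range] at hx
    rw [Finset.sum_range_succ]
    congr 1
    congr 1
    omega
  rw [Finset.sum_range_succ, Finset.sum_congr rfl key, Finset.sum_add_distrib]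
  have key2 : ∀ y ∈ range (N + 1), g (max N y - min N y) = g (N - y) := by
    intro y hy; rw [Finset.mem_range] at hy; congr 1; omega
  rw [Finset.sum_congr rfl key2, Finset.sum_range_succ]
  have : g (N - N) = 0 := by rw [Nat.sub_self, hg0]
  rw [this, sum_reflect g N]
  ring

lemma sum_Q1 (N : ℕ) :
    ∑ x ∈ range N, ∑ y ∈ range N, ((max x y - min x y : ℕ) : ℝ)
      = ((N : ℝ) ^ 3 - N) / 3 := by
  induction N with
  | zero => simp
  | succ N ih =>
      rw [sum_pair_succ (fun t => ((t : ℕ) : ℝ)) (by simp) N, ih, sum_E1]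
      push_cast; ring

lemma sum_Q2 (N : ℕ) :
    ∑ x ∈ range N, ∑ y ∈ range N, ((max x y - min x y : ℕ) : ℝ) ^ 2
      = ((N : ℝ) ^ 4 - (N : ℝ) ^ 2) / 6 := by
  induction N with
  | zero => simp
  | succ N ih =>
      rw [sum_pair_succ (fun t => ((t : ℕ) : ℝ) ^ 2) (by simp) N, ih, sum_E2]
      push_cast; ring


variable {V : Type*} [Fintype V] [DecidableEq V]

lemma O3_image : (O3 V).image (fun t => ({t.1, t.2.1, t.2.2} : Finset V))
    = Finset.powersetCard 3 Finset.univ := by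
  ext S
  simp only [Finset.mem_image, Finset.mem_powersetCard_univ]
  constructor
  · rintro ⟨t, ht, rfl⟩
    simp only [O3, Finset.mem_filter, Finset.mem_univ, true_and] at ht
    exact Finset.card_eq_three.mpr ⟨t.1, t.2.1, t.2.2, ht.1, ht.2.1, ht.2.2, rfl⟩
  · intro hS
    obtain ⟨a, b, c, hab, hac, hbc, rfl⟩ := Finset.card_eq_three.mp hS
    exact ⟨(a, b, c), by simp [O3, hab, hac, hbc], rfl⟩

lemma O3_fiber_card {S : Finset V} (hS : S ∈ Finset.powersetCard 3 Finset.univ) :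
    ((O3 V).filter (fun t => ({t.1, t.2.1, t.2.2} : Finset V) = S)).card = 6 := by
  rw [Finset.mem_powersetCard_univ] at hS
  obtain ⟨a, b, c, hab, hac, hbc, rfl⟩ := Finset.card_eq_three.mp hS
  have hset : (O3 V).filter (fun t => ({t.1, t.2.1, t.2.2} : Finset V) = {a, b, c})
      = {(a, b, c), (a, c, b), (b, a, c), (b, c, a), (c, a, b), (c, b, a)} := by
    ext ⟨x, y, z⟩
    simp only [O3, Finset.filter_filter, Finset.mem_filter, Finset.mem_univ, true_and,
      Finset.mem_insert, Finset.mem_singleton, Prod.mk.injEq]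
    constructor
    · rintro ⟨⟨hxy, hxz, hyz⟩, hS⟩
      have hx : x ∈ ({a, b, c} : Finset V) := by rw [← hS]; simp
      have hy : y ∈ ({a, b, c} : Finset V) := by rw [← hS]; simp
      have hz : z ∈ ({a, b, c} : Finset V) := by rw [← hS]; simp
      simp only [Finset.mem_insert, Finset.mem_singleton] at hx hy hz
      rcases hx with rfl | rfl | rfl <;> rcases hy with rfl | rfl | rfl <;>
        rcases hz with rfl | rfl | rfl <;> simp_all
    · rintro (⟨rfl, rfl, rfl⟩ | ⟨rfl, rfl, rfl⟩ | ⟨rfl, rfl, rfl⟩ | ⟨rfl, rfl, rfl⟩ |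
        ⟨rfl, rfl, rfl⟩ | ⟨rfl, rfl, rfl⟩) <;>        exact ⟨⟨by aesop, by aesop, by aesop⟩, by ext w; simp; try tauto⟩
  rw [hset]
  rw [Finset.card_insert_of_notMem (by simp [Prod.ext_iff]; tauto),
    Finset.card_insert_of_notMem (by simp [Prod.ext_iff]; tauto),
    Finset.card_insert_of_notMem (by simp [Prod.ext_iff]; tauto),
    Finset.card_insert_of_notMem (by simp [Prod.ext_iff]; tauto),
    Finset.card_insert_of_notMem (by simp [Prod.ext_iff]; tauto),
    Finset.card_singleton]

lemma six_mul_sum_powersetCard (f : Finset V → ℝ) :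
    (6 : ℝ) * ∑ S ∈ Finset.powersetCard 3 Finset.univ, f S
      = ∑ t ∈ O3 V, f {t.1, t.2.1, t.2.2} := by
  rw [Finset.sum_comp f (fun t : V × V × V => ({t.1, t.2.1, t.2.2} : Finset V)), O3_image]
  rw [Finset.mul_sum]
  apply Finset.sum_congr rfl
  intro S hS
  rw [O3_fiber_card hS, nsmul_eq_mul]
  norm_num


lemma DT_self (u : Fin 2 × Fin n) : DT u u u = 0 := by
  simp [DT, spN]

lemma DT_degen2 (u v : Fin 2 × Fin n) : DT u v u = DT u u v := by
  unfold DT spN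
  rcases eq_or_ne u.1 v.1 with h | h
  · simp [h]; omega
  · rw [if_neg (by tauto), if_neg (by tauto)]; omega

lemma DT_degen3 (u v : Fin 2 × Fin n) : DT u v v = DT u u v := by
  unfold DT spN
  rcases eq_or_ne u.1 v.1 with h | h
  · simp [h]
  · rw [if_neg (by tauto), if_neg (by tauto)]; omega

lemma sum_O3_DT (φ : ℕ → ℝ) (hφ : φ 0 = 0) :
    ∑ t ∈ O3 (Fin 2 × Fin n), φ (DT t.1 t.2.1 t.2.2)
      = (∑ u : Fin 2 × Fin n, ∑ v : Fin 2 × Fin n, ∑ w : Fin 2 × Fin n, φ (DT u v w))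
        - 3 * (∑ u : Fin 2 × Fin n, ∑ v : Fin 2 × Fin n, φ (DT u u v)) := by
  classical
  rw [O3, Finset.sum_filter]
  have key : ∀ t : (Fin 2 × Fin n) × (Fin 2 × Fin n) × (Fin 2 × Fin n),
      (if t.1 ≠ t.2.1 ∧ t.1 ≠ t.2.2 ∧ t.2.1 ≠ t.2.2 then φ (DT t.1 t.2.1 t.2.2) else 0)
      = φ (DT t.1 t.2.1 t.2.2)
        - (if t.1 = t.2.1 then φ (DT t.1 t.2.1 t.2.2) else 0)
        - (if t.1 = t.2.2 then φ (DT t.1 t.2.1 t.2.2) else 0)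
        - (if t.2.1 = t.2.2 then φ (DT t.1 t.2.1 t.2.2) else 0)
        + 2 * (if t.1 = t.2.1 ∧ t.1 = t.2.2 then φ (DT t.1 t.2.1 t.2.2) else 0) := by
    intro t
    by_cases h1 : t.1 = t.2.1 <;> by_cases h2 : t.1 = t.2.2 <;> by_cases h3 : t.2.1 = t.2.2 <;>
      simp_all <;> ring
  rw [Finset.sum_congr rfl (fun t _ => key t)]
  simp only [Finset.sum_add_distrib, Finset.sum_sub_distrib, ← Finset.mul_sum]
  have h0 : (∑ t : (Fin 2 × Fin n) × (Fin 2 × Fin n) × (Fin 2 × Fin n), φ (DT t.1 t.2.1 t.2.2))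
      = ∑ u : Fin 2 × Fin n, ∑ v : Fin 2 × Fin n, ∑ w : Fin 2 × Fin n, φ (DT u v w) := by
    rw [Fintype.sum_prod_type]
    exact Finset.sum_congr rfl fun u _ => Fintype.sum_prod_type _
  have h12 : (∑ t : (Fin 2 × Fin n) × (Fin 2 × Fin n) × (Fin 2 × Fin n),
      if t.1 = t.2.1 then φ (DT t.1 t.2.1 t.2.2) else 0)
      = ∑ u : Fin 2 × Fin n, ∑ v : Fin 2 × Fin n, φ (DT u u v) := by
    rw [Fintype.sum_prod_type]
    apply Finset.sum_congr rfl
    intro u _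
    rw [Fintype.sum_prod_type]
    have : ∀ v : Fin 2 × Fin n, (∑ w : Fin 2 × Fin n, if u = v then φ (DT u v w) else 0)
        = if u = v then ∑ w : Fin 2 × Fin n, φ (DT u v w) else 0 := by
      intro v; by_cases h : u = v <;> simp [h]
    rw [Finset.sum_congr rfl fun v _ => this v, Finset.sum_ite_eq]
    simp
  have h13 : (∑ t : (Fin 2 × Fin n) × (Fin 2 × Fin n) × (Fin 2 × Fin n),
      if t.1 = t.2.2 then φ (DT t.1 t.2.1 t.2.2) else 0)
      = ∑ u : Fin 2 × Fin n, ∑ v : Fin 2 × Fin n, φ (DT u u v) := by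
    rw [Fintype.sum_prod_type]
    apply Finset.sum_congr rfl
    intro u _
    rw [Fintype.sum_prod_type]
    have : ∀ v : Fin 2 × Fin n, (∑ w : Fin 2 × Fin n, if u = w then φ (DT u v w) else 0)
        = φ (DT u v u) := by
      intro v; rw [Finset.sum_ite_eq]; simp
    rw [Finset.sum_congr rfl fun v _ => this v]
    exact Finset.sum_congr rfl fun v _ => by rw [DT_degen2]
  have h23 : (∑ t : (Fin 2 × Fin n) × (Fin 2 × Fin n) × (Fin 2 × Fin n),
      if t.2.1 = t.2.2 then φ (DT t.1 t.2.1 t.2.2) else 0)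
      = ∑ u : Fin 2 × Fin n, ∑ v : Fin 2 × Fin n, φ (DT u u v) := by
    rw [Fintype.sum_prod_type]
    apply Finset.sum_congr rfl
    intro u _
    rw [Fintype.sum_prod_type]
    have : ∀ v : Fin 2 × Fin n, (∑ w : Fin 2 × Fin n, if v = w then φ (DT u v w) else 0)
        = φ (DT u v v) := by
      intro v; rw [Finset.sum_ite_eq]; simp
    rw [Finset.sum_congr rfl fun v _ => this v]
    exact Finset.sum_congr rfl fun v _ => by rw [DT_degen3]
  have hall : (∑ t : (Fin 2 × Fin n) × (Fin 2 × Fin n) × (Fin 2 × Fin n),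
      if t.1 = t.2.1 ∧ t.1 = t.2.2 then φ (DT t.1 t.2.1 t.2.2) else 0) = 0 := by
    rw [Fintype.sum_prod_type]
    apply Finset.sum_eq_zero
    intro u _
    rw [Fintype.sum_prod_type]
    apply Finset.sum_eq_zero
    intro v _
    by_cases h : u = v
    · subst h
      simp only [true_and]
      rw [Finset.sum_ite_eq]
      simp [DT_self, hφ]
    · simp [h]
  rw [h0, h12, h13, h23, hall]
  ring


lemma T_split (φ : ℕ → ℝ) :
    (∑ u : Fin 2 × Fin n, ∑ v : Fin 2 × Fin n, ∑ w : Fin 2 × Fin n, φ (DT u v w))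
      = 2 * (∑ x : Fin n, ∑ y : Fin n, ∑ z : Fin n, φ (spN x.val y.val z.val))
        + 6 * (∑ x : Fin n, ∑ y : Fin n, ∑ z : Fin n, φ (spN x.val y.val z.val + 1)) := by
  simp only [Fintype.sum_prod_type, DT]
  simp only [Fin.sum_univ_two]
  norm_num
  simp only [Finset.sum_add_distrib]
  ring

lemma B_split (φ : ℕ → ℝ) :
    (∑ u : Fin 2 × Fin n, ∑ v : Fin 2 × Fin n, φ (DT u u v))
      = 2 * (∑ x : Fin n, ∑ y : Fin n, φ (max x.val y.val - min x.val y.val))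
        + 2 * (∑ x : Fin n, ∑ y : Fin n, φ (max x.val y.val - min x.val y.val + 1)) := by
  have hsp : ∀ x y : Fin n, spN x.val x.val y.val = max x.val y.val - min x.val y.val := by
    intro x y; unfold spN; omega
  simp only [Fintype.sum_prod_type, DT, hsp]
  simp only [Fin.sum_univ_two]
  norm_num
  simp only [Finset.sum_add_distrib]
  ring


-- Fin-sum to range-sum conversions
lemma fin3_to_range (f : ℕ → ℕ → ℕ → ℝ) :
    (∑ x : Fin n, ∑ y : Fin n, ∑ z : Fin n, f x.val y.val z.val)
      = ∑ x ∈ range n, ∑ y ∈ range n, ∑ z ∈ range n, f x y z := by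
  rw [Fin.sum_univ_eq_sum_range (fun a => ∑ y : Fin n, ∑ z : Fin n, f a y.val z.val) n]
  apply Finset.sum_congr rfl
  intro x _
  rw [Fin.sum_univ_eq_sum_range (fun b => ∑ z : Fin n, f x b z.val) n]
  apply Finset.sum_congr rfl
  intro y _
  rw [Fin.sum_univ_eq_sum_range (fun c => f x y c) n]

lemma fin2_to_range (f : ℕ → ℕ → ℝ) :
    (∑ x : Fin n, ∑ y : Fin n, f x.val y.val)
      = ∑ x ∈ range n, ∑ y ∈ range n, f x y := by
  rw [Fin.sum_univ_eq_sum_range (fun a => ∑ y : Fin n, f a y.val) n]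
  apply Finset.sum_congr rfl
  intro x _
  rw [Fin.sum_univ_eq_sum_range (fun b => f x b) n]

lemma six_mul_sum_DT (φ : ℕ → ℝ) (hφ : φ 0 = 0) :
    (6 : ℝ) * ∑ S ∈ Finset.powersetCard 3 (Finset.univ : Finset (Fin 2 × Fin n)),
        φ (steinerDist (Lad n) (S : Set (Fin 2 × Fin n)))
      = 2 * (∑ x : Fin n, ∑ y : Fin n, ∑ z : Fin n, φ (spN x.val y.val z.val))
        + 6 * (∑ x : Fin n, ∑ y : Fin n, ∑ z : Fin n, φ (spN x.val y.val z.val + 1))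
        - 3 * (2 * (∑ x : Fin n, ∑ y : Fin n, φ (max x.val y.val - min x.val y.val))
          + 2 * (∑ x : Fin n, ∑ y : Fin n, φ (max x.val y.val - min x.val y.val + 1))) := by
  refine Eq.trans (six_mul_sum_powersetCard
    (fun S : Finset (Fin 2 × Fin n) => φ (steinerDist (Lad n) (↑S : Set (Fin 2 × Fin n))))) ?_
  have hpt : ∀ t ∈ O3 (Fin 2 × Fin n),
      φ (steinerDist (Lad n) (({t.1, t.2.1, t.2.2} : Finset (Fin 2 × Fin n)) : Set (Fin 2 × Fin n)))
        = φ (DT t.1 t.2.1 t.2.2) := by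
    intro t _
    congr 1
    rw [show (({t.1, t.2.1, t.2.2} : Finset (Fin 2 × Fin n)) : Set (Fin 2 × Fin n))
        = ({t.1, t.2.1, t.2.2} : Set (Fin 2 × Fin n)) by simp]
    exact steiner_eq_DT t.1 t.2.1 t.2.2
  rw [Finset.sum_congr rfl hpt, sum_O3_DT φ hφ, T_split φ, B_split φ]

lemma count3 : (∑ _x : Fin n, ∑ _y : Fin n, ∑ _z : Fin n, (1 : ℝ)) = (n : ℝ) ^ 3 := by
  simp [Finset.sum_const, Finset.card_univ]
  ring

lemma count2 : (∑ _x : Fin n, ∑ _y : Fin n, (1 : ℝ)) = (n : ℝ) ^ 2 := by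
  simp [Finset.sum_const, Finset.card_univ]
  ring

lemma sum_sd_1 :
    (6 : ℝ) * ∑ S ∈ Finset.powersetCard 3 (Finset.univ : Finset (Fin 2 × Fin n)),
        ((steinerDist (Lad n) (S : Set (Fin 2 × Fin n)) : ℕ) : ℝ)
      = 6 * ((2 * (n : ℝ) ^ 4 + (n : ℝ) ^ 3 - 5 * (n : ℝ) ^ 2 + 2 * n) / 3) := by
  rw [six_mul_sum_DT (fun t => ((t : ℕ) : ℝ)) (by simp)]
  have e1 : (∑ x : Fin n, ∑ y : Fin n, ∑ z : Fin n, ((spN x.val y.val z.val + 1 : ℕ) : ℝ))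
      = (∑ x : Fin n, ∑ y : Fin n, ∑ z : Fin n, ((spN x.val y.val z.val : ℕ) : ℝ))
        + (n : ℝ) ^ 3 := by
    rw [← count3 (n := n), ← Finset.sum_add_distrib]
    apply Finset.sum_congr rfl; intro x _
    rw [← Finset.sum_add_distrib]
    apply Finset.sum_congr rfl; intro y _
    rw [← Finset.sum_add_distrib]
    apply Finset.sum_congr rfl; intro z _
    push_cast; ring
  have e2 : (∑ x : Fin n, ∑ y : Fin n, ((max x.val y.val - min x.val y.val + 1 : ℕ) : ℝ))
      = (∑ x : Fin n, ∑ y : Fin n, ((max x.val y.val - min x.val y.val : ℕ) : ℝ))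
        + (n : ℝ) ^ 2 := by
    rw [← count2 (n := n), ← Finset.sum_add_distrib]
    apply Finset.sum_congr rfl; intro x _
    rw [← Finset.sum_add_distrib]
    apply Finset.sum_congr rfl; intro y _
    push_cast; ring
  rw [e1, e2, fin3_to_range (fun x y z => ((spN x y z : ℕ) : ℝ)),
    fin2_to_range (fun x y => ((max x y - min x y : ℕ) : ℝ)), sum_P1, sum_Q1]
  ring

lemma sum_sd_2 :
    (6 : ℝ) * ∑ S ∈ Finset.powersetCard 3 (Finset.univ : Finset (Fin 2 × Fin n)),
        ((steinerDist (Lad n) (S : Set (Fin 2 × Fin n)) : ℕ) : ℝ) ^ 2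
      = 8 * ((3 * (n : ℝ) ^ 5 - 5 * (n : ℝ) ^ 3 + 2 * n) / 10)
        + 12 * (((n : ℝ) ^ 4 - (n : ℝ) ^ 2) / 2) + 6 * (n : ℝ) ^ 3
        - 12 * (((n : ℝ) ^ 4 - (n : ℝ) ^ 2) / 6)
        - 12 * (((n : ℝ) ^ 3 - (n : ℝ)) / 3) - 6 * (n : ℝ) ^ 2 := by
  rw [six_mul_sum_DT (fun t => ((t : ℕ) : ℝ) ^ 2) (by simp)]
  have e1 : (∑ x : Fin n, ∑ y : Fin n, ∑ z : Fin n, ((spN x.val y.val z.val + 1 : ℕ) : ℝ) ^ 2)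
      = (∑ x : Fin n, ∑ y : Fin n, ∑ z : Fin n, ((spN x.val y.val z.val : ℕ) : ℝ) ^ 2)
        + 2 * (∑ x : Fin n, ∑ y : Fin n, ∑ z : Fin n, ((spN x.val y.val z.val : ℕ) : ℝ))
        + (n : ℝ) ^ 3 := by
    rw [← count3 (n := n), two_mul, ← Finset.sum_add_distrib, ← Finset.sum_add_distrib,
      ← Finset.sum_add_distrib]
    apply Finset.sum_congr rfl; intro x _
    rw [← Finset.sum_add_distrib, ← Finset.sum_add_distrib, ← Finset.sum_add_distrib]
    apply Finset.sum_congr rfl; intro y _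
    rw [← Finset.sum_add_distrib, ← Finset.sum_add_distrib, ← Finset.sum_add_distrib]
    apply Finset.sum_congr rfl; intro z _
    push_cast; ring
  have e2 : (∑ x : Fin n, ∑ y : Fin n, ((max x.val y.val - min x.val y.val + 1 : ℕ) : ℝ) ^ 2)
      = (∑ x : Fin n, ∑ y : Fin n, ((max x.val y.val - min x.val y.val : ℕ) : ℝ) ^ 2)
        + 2 * (∑ x : Fin n, ∑ y : Fin n, ((max x.val y.val - min x.val y.val : ℕ) : ℝ))
        + (n : ℝ) ^ 2 := by
    rw [← count2 (n := n), two_mul, ← Finset.sum_add_distrib, ← Finset.sum_add_distrib,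
      ← Finset.sum_add_distrib]
    apply Finset.sum_congr rfl; intro x _
    rw [← Finset.sum_add_distrib, ← Finset.sum_add_distrib, ← Finset.sum_add_distrib]
    apply Finset.sum_congr rfl; intro y _
    push_cast; ring
  rw [e1, e2, fin3_to_range (fun x y z => ((spN x y z : ℕ) : ℝ) ^ 2),
    fin3_to_range (fun x y z => ((spN x y z : ℕ) : ℝ)),
    fin2_to_range (fun x y => ((max x y - min x y : ℕ) : ℝ) ^ 2),
    fin2_to_range (fun x y => ((max x y - min x y : ℕ) : ℝ)),
    sum_P1, sum_P2, sum_Q1, sum_Q2]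
  ring

end SteinerLadder

/-- Steiner 3-hyper-Wiener index of the grid graph `G_{2,n} = P_2 □ P_n`, `n ≥ 3`:
`SWW₃(G_{2,n}) = (1/15)(3n⁵ + 10n⁴ − 25n² + 12n)`. -/
theorem steiner_three_hyper_wiener_ladder (n : ℕ) (hn : 3 ≤ n) :
    SWW 3 (SimpleGraph.pathGraph 2 □ SimpleGraph.pathGraph n)
      = 1 / 15 * (3 * (n : ℝ) ^ 5 + 10 * (n : ℝ) ^ 4 - 25 * (n : ℝ) ^ 2 + 12 * (n : ℝ)) := by
  have h1 := SteinerLadder.sum_sd_1 (n := n)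
  have h2 := SteinerLadder.sum_sd_2 (n := n)
  rw [SWW]
  linear_combination h1 / 12 + h2 / 12
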